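/- arXiv:2311.14317 — 5 statements merged into one kernel-verified Lean document; each statement's English description precedes it below -/
import Mathlib

section
/- Assume (A1), h, τ > 0, and D : ℝ^d × [0,T] → ℝ bounded and nonnegative. Let (U^n) and (V^n) be solutions of the scheme (S) with bounded initial data U^0 and V^0 respectively. Then ‖U^n − V^n‖_{L^∞(ℝ^d)} ≤ ‖U^0 − V^0‖_{L^∞(ℝ^d)} for all n ≥ 0 with t_n ≤ T. -/
open MeasureTheory Real Filter Set

noncomputable section

/-- Discrete grid point `hβ` in `ℝ^d`. -/
def zvec (d : ℕ) (h : ℝ) (β : Fin d → ℤ) : EuclideanSpace ℝ (Fin d) :=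
  WithLp.toLp 2 (fun i => h * (β i : ℝ))

/-- Assumption (A1): symmetric nonnegative summable weights. -/
def A1 (d : ℕ) (ω : (Fin d → ℤ) → ℝ) : Prop :=
  (∀ β : Fin d → ℤ, ω β = ω (-β)) ∧ (∀ β : Fin d → ℤ, 0 ≤ ω β) ∧
    Summable (fun β : {β : Fin d → ℤ // β ≠ 0} => ω β.1)

/-- Assumption (A2): moment condition on the weights. -/
def A2 (d : ℕ) (h : ℝ) (ω : (Fin d → ℤ) → ℝ) (r Cr : ℝ) : Prop :=
  Summable (fun β : {β : Fin d → ℤ // β ≠ 0} => min (‖zvec d h β.1‖ ^ r) 1 * ω β.1) ∧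
    ∑' β : {β : Fin d → ℤ // β ≠ 0}, min (‖zvec d h β.1‖ ^ r) 1 * ω β.1 ≤ Cr

/-- The discrete diffusion operator `L_h`. -/
def Lh (d : ℕ) (h : ℝ) (ω : (Fin d → ℤ) → ℝ) (ψ : EuclideanSpace ℝ (Fin d) → ℝ)
    (x : EuclideanSpace ℝ (Fin d)) : ℝ :=
  ∑' β : {β : Fin d → ℤ // β ≠ 0},
    (ψ (x + zvec d h β.1) + ψ (x - zvec d h β.1) - 2 * ψ x) * ω β.1

/-- The L1 coefficients `b_i = (i+1)^{1-α} - i^{1-α}`. -/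
def bcoef (α : ℝ) (i : ℕ) : ℝ := ((i : ℝ) + 1) ^ (1 - α) - (i : ℝ) ^ (1 - α)

/-- The L1 discrete Caputo derivative of a sequence. -/
def capD (α τ : ℝ) (v : ℕ → ℝ) (n : ℕ) : ℝ :=
  (τ ^ (-α) / Real.Gamma (2 - α)) *
    (v n - bcoef α (n - 1) * v 0 -
      ∑ k ∈ Finset.Icc 1 (n - 1), (bcoef α (n - k - 1) - bcoef α (n - k)) * v k)

/-- The L1 discrete Riemann–Liouville derivative of a sequence. -/
def rlD (α τ : ℝ) (f : ℕ → ℝ) (n : ℕ) : ℝ :=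
  (τ ^ (-α) / Real.Gamma (2 - α)) *
    (f n - ∑ k ∈ Finset.range n, (bcoef α (n - k - 1) - bcoef α (n - k)) * f k)

/-- Solution of the numerical scheme (S) on `[0,T]`:
a sequence of bounded functions satisfying the L1/`L_h` equation. -/
def SchemeSol (d : ℕ) (h τ α T : ℝ) (ω : (Fin d → ℤ) → ℝ)
    (D : EuclideanSpace ℝ (Fin d) → ℝ → ℝ)
    (U : ℕ → EuclideanSpace ℝ (Fin d) → ℝ) : Prop :=
  (∀ n : ℕ, (n : ℝ) * τ ≤ T → ∃ M : ℝ, ∀ x, |U n x| ≤ M) ∧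
  (∀ n : ℕ, 1 ≤ n → (n : ℝ) * τ ≤ T → ∀ x,
    capD α τ (fun m => U m x) n = D x ((n : ℝ) * τ) * Lh d h ω (U n) x)

/-- `‖φ‖_{X^r} ≤ K`, encoded via decomposed bounds. -/
def XNormLe (d : ℕ) (r K : ℝ) (φ : EuclideanSpace ℝ (Fin d) → ℝ) : Prop :=
  if r = 0 then ∀ x, |φ x| ≤ K
  else if r ≤ 1 then
    ∃ A B : ℝ, A + B ≤ K ∧ (∀ x, |φ x| ≤ A) ∧
      ∀ x y : EuclideanSpace ℝ (Fin d), x ≠ y → |φ x - φ y| ≤ B * ‖x - y‖ ^ r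
  else
    ∃ A B C : ℝ, A + B + C ≤ K ∧ (∀ x, |φ x| ≤ A) ∧
      (∀ x y : EuclideanSpace ℝ (Fin d), |φ x - φ y| ≤ B * ‖x - y‖) ∧
      Differentiable ℝ φ ∧
      ∀ x y : EuclideanSpace ℝ (Fin d), x ≠ y →
        ‖fderiv ℝ φ x - fderiv ℝ φ y‖ ≤ C * ‖x - y‖ ^ (r - 1)

/-- Continuous Caputo derivative. -/
def caputo (α : ℝ) (φ : ℝ → ℝ) (t : ℝ) : ℝ :=
  (1 / Real.Gamma (1 - α)) *
    ((φ t - φ 0) / t ^ α + α * ∫ s in (0:ℝ)..t, (φ t - φ s) / (t - s) ^ (1 + α))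

/-- Mittag-Leffler function `E_{α,β}`. -/
def mittagLeffler (α β z : ℝ) : ℝ := ∑' k : ℕ, z ^ k / Real.Gamma (α * k + β)

lemma bcoef_nonneg {α : ℝ} (hα1 : α ≤ 1) (i : ℕ) : 0 ≤ bcoef α i := by
  have : (i:ℝ) ^ (1-α) ≤ ((i:ℝ)+1) ^ (1-α) :=
    Real.rpow_le_rpow (Nat.cast_nonneg i) (by linarith) (by linarith)
  simpa [bcoef] using this

lemma bcoef_zero {α : ℝ} (hα1 : α < 1) : bcoef α 0 = 1 := by
  simp [bcoef, Real.zero_rpow (by linarith : (1:ℝ)-α ≠ 0)]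

lemma bcoef_anti {α : ℝ} (hα0 : 0 < α) (hα1 : α < 1) (i : ℕ) :
    bcoef α (i+1) ≤ bcoef α i := by
  set p := 1 - α with hp
  have hcc := (Real.strictConcaveOn_rpow (by linarith : 0 < p) (by linarith : p < 1)).concaveOn
  have key := hcc.2 (Set.mem_Ici.mpr (Nat.cast_nonneg i))
      (Set.mem_Ici.mpr (by positivity : (0:ℝ) ≤ (i:ℝ)+2))
      (by norm_num : (0:ℝ) ≤ 1/2) (by norm_num : (0:ℝ) ≤ 1/2) (by norm_num)
  have hmid : (1/2:ℝ) • (i:ℝ) + (1/2:ℝ) • ((i:ℝ)+2) = (i:ℝ)+1 := by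
    simp [smul_eq_mul]; ring
  rw [hmid] at key
  simp only [smul_eq_mul] at key
  have hcast : ((i+1:ℕ):ℝ) = (i:ℝ)+1 := by push_cast; ring
  simp only [bcoef, hcast]
  have h2 : ((i:ℝ)+1)+1 = (i:ℝ)+2 := by ring
  rw [h2]
  linarith

lemma bcoef_telescope {α : ℝ} (n : ℕ) (hn : 1 ≤ n) :
    ∑ k ∈ Finset.Icc 1 (n-1), (bcoef α (n-k-1) - bcoef α (n-k))
      = bcoef α 0 - bcoef α (n-1) := by
  obtain ⟨m, rfl⟩ : ∃ m, n = m + 1 := ⟨n - 1, (Nat.succ_pred_eq_of_pos hn).symm⟩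
  simp only [Nat.add_sub_cancel]
  have h1 : Finset.Icc 1 m = Finset.Ico 1 (m+1) := by
    ext a; simp [Nat.lt_succ_iff]
  rw [h1, Finset.sum_Ico_eq_sum_range]
  simp only [Nat.add_sub_cancel]
  have h2 : ∀ k ∈ Finset.range m,
      (bcoef α (m+1-(1+k)-1) - bcoef α (m+1-(1+k)))
        = (fun j => bcoef α j - bcoef α (j+1)) (m - 1 - k) := by
    intro k hk
    have hk' : k < m := Finset.mem_range.mp hk
    have e1 : m + 1 - (1+k) - 1 = m - 1 - k := by omega
    have e2 : m + 1 - (1+k) = (m - 1 - k) + 1 := by omega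
    simp [e1, e2]
  rw [Finset.sum_congr rfl h2]
  exact (Finset.sum_range_reflect _ m).trans (Finset.sum_range_sub' _ m)

lemma summable_bd {d : ℕ} {ω : (Fin d → ℤ) → ℝ}
    (hωsum : Summable (fun β : {β : Fin d → ℤ // β ≠ 0} => ω β.1))
    (hωnn : ∀ β, 0 ≤ ω β)
    (g : {β : Fin d → ℤ // β ≠ 0} → ℝ) (C : ℝ) (hg : ∀ β, |g β| ≤ C) :
    Summable (fun β : {β : Fin d → ℤ // β ≠ 0} => g β * ω β.1) := by
  apply Summable.of_abs
  apply Summable.of_nonneg_of_le (fun β => abs_nonneg _)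
    (fun β => ?_) (hωsum.mul_left C)
  rw [abs_mul, abs_of_nonneg (hωnn β.1)]
  exact mul_le_mul_of_nonneg_right (hg β) (hωnn β.1)

lemma tsum_bd {d : ℕ} {ω : (Fin d → ℤ) → ℝ}
    (hωsum : Summable (fun β : {β : Fin d → ℤ // β ≠ 0} => ω β.1))
    (hωnn : ∀ β, 0 ≤ ω β)
    (g : {β : Fin d → ℤ // β ≠ 0} → ℝ) (C : ℝ) (hg : ∀ β, |g β| ≤ C) :
    |∑' β : {β : Fin d → ℤ // β ≠ 0}, g β * ω β.1|
      ≤ C * ∑' β : {β : Fin d → ℤ // β ≠ 0}, ω β.1 := by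
  have habs : Summable (fun β : {β : Fin d → ℤ // β ≠ 0} => |g β * ω β.1|) := by
    apply Summable.of_nonneg_of_le (fun β => abs_nonneg _)
      (fun β => ?_) (hωsum.mul_left C)
    rw [abs_mul, abs_of_nonneg (hωnn β.1)]
    exact mul_le_mul_of_nonneg_right (hg β) (hωnn β.1)
  calc |∑' β : {β : Fin d → ℤ // β ≠ 0}, g β * ω β.1|
      ≤ ∑' β : {β : Fin d → ℤ // β ≠ 0}, |g β * ω β.1| := by
        have hh := norm_tsum_le_tsum_norm (f := fun β : {β : Fin d → ℤ // β ≠ 0} => g β * ω β.1) (by simpa only [Real.norm_eq_abs] using habs)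
        simpa only [Real.norm_eq_abs] using hh
    _ ≤ ∑' β : {β : Fin d → ℤ // β ≠ 0}, C * ω β.1 := by
        apply Summable.tsum_le_tsum _ habs (hωsum.mul_left C)
        intro β
        rw [abs_mul, abs_of_nonneg (hωnn β.1)]
        exact mul_le_mul_of_nonneg_right (hg β) (hωnn β.1)
    _ = C * ∑' β : {β : Fin d → ℤ // β ≠ 0}, ω β.1 := tsum_mul_left

set_option maxHeartbeats 1000000 in

/-- L∞-contraction of the scheme (S). -/
theorem scheme_linfty_contraction
    (d : ℕ) (h τ α T : ℝ) (ω : (Fin d → ℤ) → ℝ)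
    (D : EuclideanSpace ℝ (Fin d) → ℝ → ℝ)
    (U V : ℕ → EuclideanSpace ℝ (Fin d) → ℝ)
    (hα : α ∈ Set.Ioo (0:ℝ) 1) (hh : 0 < h) (hτ : 0 < τ) (hT : 0 < T)
    (hA1 : A1 d ω)
    (hDbdd : ∃ M : ℝ, ∀ x t, t ∈ Set.Icc (0:ℝ) T → |D x t| ≤ M)
    (hDpos : ∀ x t, t ∈ Set.Icc (0:ℝ) T → 0 ≤ D x t)
    (hU : SchemeSol d h τ α T ω D U) (hV : SchemeSol d h τ α T ω D V) :
    ∀ n : ℕ, (n : ℝ) * τ ≤ T →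
      ∀ M : ℝ, (∀ x, |U 0 x - V 0 x| ≤ M) → ∀ x, |U n x - V n x| ≤ M := by
  obtain ⟨hα0, hα1⟩ := hα
  obtain ⟨MD, hMD⟩ := hDbdd
  obtain ⟨hsym, hωnn, hωsum⟩ := hA1
  set c : ℝ := τ ^ (-α) / Real.Gamma (2 - α) with hc_def
  have hc : 0 < c :=
    div_pos (Real.rpow_pos_of_pos hτ _) (Real.Gamma_pos_of_pos (by linarith))
  set Ω : ℝ := ∑' β : {β : Fin d → ℤ // β ≠ 0}, ω β.1 with hΩ_def
  have hΩ : 0 ≤ Ω := tsum_nonneg (fun β => hωnn β.1)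
  set Dm : ℝ := max MD 0 with hDm_def
  have hDm0 : 0 ≤ Dm := le_max_right _ _
  intro n
  induction n using Nat.strong_induction_on with
  | _ n IH =>
  intro hnT M hM0
  rcases Nat.eq_zero_or_pos n with rfl | hn1
  · exact hM0
  -- n ≥ 1
  have hM_nn : (0:ℝ) ≤ M := le_trans (abs_nonneg _) (hM0 0)
  have htn_mem : (n:ℝ) * τ ∈ Set.Icc (0:ℝ) T :=
    ⟨mul_nonneg (Nat.cast_nonneg n) hτ.le, hnT⟩
  have hWprev : ∀ k, k < n → ∀ y, |U k y - V k y| ≤ M := by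
    intro k hk y
    have hkT : (k:ℝ) * τ ≤ T := by
      refine le_trans ?_ hnT
      have : (k:ℝ) ≤ (n:ℝ) := by exact_mod_cast hk.le
      nlinarith
    exact IH k hk hkT M hM0 y
  obtain ⟨MU, hMU⟩ := hU.1 n hnT
  obtain ⟨MV, hMV⟩ := hV.1 n hnT
  set S : ℝ := sSup (Set.range fun y => |U n y - V n y|) with hS_def
  have hrange_ne : (Set.range fun y => |U n y - V n y|).Nonempty := ⟨_, ⟨0, rfl⟩⟩
  have hbdd : BddAbove (Set.range fun y => |U n y - V n y|) := by
    refine ⟨MU + MV, ?_⟩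
    rintro _ ⟨y, rfl⟩
    have := abs_add_le (U n y) (-(V n y))
    simp only [abs_neg, ← sub_eq_add_neg] at this
    exact this.trans (add_le_add (hMU y) (hMV y))
  have hS_ub : ∀ y, |U n y - V n y| ≤ S := fun y => le_csSup hbdd ⟨y, rfl⟩
  have hS0 : 0 ≤ S := le_trans (abs_nonneg _) (hS_ub 0)
  -- key pointwise estimate
  have key : ∀ y, (c + 2 * D y ((n:ℝ)*τ) * Ω) * |U n y - V n y|
      ≤ c * M + 2 * D y ((n:ℝ)*τ) * Ω * S := by
    intro y
    have hDnn : 0 ≤ D y ((n:ℝ)*τ) := hDpos y _ htn_mem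
    set Dy : ℝ := D y ((n:ℝ)*τ) with hDy_def
    -- summability
    have hsumU : Summable (fun β : {β : Fin d → ℤ // β ≠ 0} =>
        (U n (y + zvec d h β.1) + U n (y - zvec d h β.1) - 2 * U n y) * ω β.1) := by
      apply summable_bd hωsum hωnn _ (4*MU)
      intro β
      have h1 := hMU (y + zvec d h β.1); have h2 := hMU (y - zvec d h β.1)
      have h3 := hMU y
      have := abs_le.mp h1; have := abs_le.mp h2; have := abs_le.mp h3
      rw [abs_le]; constructor <;> nlinarith [abs_le.mp h1, abs_le.mp h2, abs_le.mp h3]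
    have hsumV : Summable (fun β : {β : Fin d → ℤ // β ≠ 0} =>
        (V n (y + zvec d h β.1) + V n (y - zvec d h β.1) - 2 * V n y) * ω β.1) := by
      apply summable_bd hωsum hωnn _ (4*MV)
      intro β
      have h1 := hMV (y + zvec d h β.1); have h2 := hMV (y - zvec d h β.1)
      have h3 := hMV y
      rw [abs_le]; constructor <;> nlinarith [abs_le.mp h1, abs_le.mp h2, abs_le.mp h3]
    have hgP : ∀ β : {β : Fin d → ℤ // β ≠ 0},
        |(U n (y + zvec d h β.1) - V n (y + zvec d h β.1))
          + (U n (y - zvec d h β.1) - V n (y - zvec d h β.1))| ≤ 2 * S := by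
      intro β
      have h1 := hS_ub (y + zvec d h β.1); have h2 := hS_ub (y - zvec d h β.1)
      calc |_ + _| ≤ _ + _ := abs_add_le _ _
        _ ≤ 2 * S := by linarith
    have hsumP : Summable (fun β : {β : Fin d → ℤ // β ≠ 0} =>
        ((U n (y + zvec d h β.1) - V n (y + zvec d h β.1))
          + (U n (y - zvec d h β.1) - V n (y - zvec d h β.1))) * ω β.1) :=
      summable_bd hωsum hωnn _ (2*S) hgP
    set P : ℝ := ∑' β : {β : Fin d → ℤ // β ≠ 0},
        ((U n (y + zvec d h β.1) - V n (y + zvec d h β.1))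
          + (U n (y - zvec d h β.1) - V n (y - zvec d h β.1))) * ω β.1 with hP_def
    have hP_le : |P| ≤ 2 * S * Ω := tsum_bd hωsum hωnn _ (2*S) hgP
    -- Lh difference
    have hLh : Lh d h ω (U n) y - Lh d h ω (V n) y = P - 2 * (U n y - V n y) * Ω := by
      rw [hP_def, Lh, Lh, ← Summable.tsum_sub hsumU hsumV]
      have : ∀ β : {β : Fin d → ℤ // β ≠ 0},
          (U n (y + zvec d h β.1) + U n (y - zvec d h β.1) - 2 * U n y) * ω β.1
            - (V n (y + zvec d h β.1) + V n (y - zvec d h β.1) - 2 * V n y) * ω β.1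
          = ((U n (y + zvec d h β.1) - V n (y + zvec d h β.1))
              + (U n (y - zvec d h β.1) - V n (y - zvec d h β.1))) * ω β.1
            - (2 * (U n y - V n y)) * ω β.1 := by
        intro β; ring
      rw [tsum_congr this, Summable.tsum_sub hsumP ((hωsum.mul_left _)), tsum_mul_left]
    -- the scheme equation for the difference
    have hUeq := hU.2 n hn1 hnT y
    have hVeq := hV.2 n hn1 hnT y
    have hs : ∑ k ∈ Finset.Icc 1 (n-1),
        (bcoef α (n-k-1) - bcoef α (n-k)) * (U k y - V k y)
        = (∑ k ∈ Finset.Icc 1 (n-1), (bcoef α (n-k-1) - bcoef α (n-k)) * U k y)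
          - ∑ k ∈ Finset.Icc 1 (n-1), (bcoef α (n-k-1) - bcoef α (n-k)) * V k y := by
      rw [← Finset.sum_sub_distrib]
      exact Finset.sum_congr rfl (fun k _ => by ring)
    have hcap : capD α τ (fun m => U m y) n - capD α τ (fun m => V m y) n
        = c * ((U n y - V n y) - bcoef α (n-1) * (U 0 y - V 0 y)
            - ∑ k ∈ Finset.Icc 1 (n-1),
                (bcoef α (n-k-1) - bcoef α (n-k)) * (U k y - V k y)) := by
      simp only [capD, ← hc_def]
      rw [hs]; ring
    have heq : c * ((U n y - V n y) - bcoef α (n-1) * (U 0 y - V 0 y)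
            - ∑ k ∈ Finset.Icc 1 (n-1),
                (bcoef α (n-k-1) - bcoef α (n-k)) * (U k y - V k y))
        = Dy * (P - 2 * (U n y - V n y) * Ω) := by
      rw [← hcap, hUeq, hVeq, ← mul_sub, hLh]
    have hre : (c + 2 * Dy * Ω) * (U n y - V n y)
        = c * (bcoef α (n-1) * (U 0 y - V 0 y)
            + ∑ k ∈ Finset.Icc 1 (n-1),
                (bcoef α (n-k-1) - bcoef α (n-k)) * (U k y - V k y))
          + Dy * P := by
      linear_combination heq
    -- bounds
    have hb_nn : 0 ≤ bcoef α (n-1) := bcoef_nonneg hα1.le _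
    have ha_nn : ∀ k ∈ Finset.Icc 1 (n-1), 0 ≤ bcoef α (n-k-1) - bcoef α (n-k) := by
      intro k hk
      obtain ⟨hk1, hk2⟩ := Finset.mem_Icc.mp hk
      have e : n - k = (n-k-1)+1 := by omega
      rw [e]
      exact sub_nonneg.mpr (bcoef_anti hα0 hα1 _)
    have hsum_le : |∑ k ∈ Finset.Icc 1 (n-1),
        (bcoef α (n-k-1) - bcoef α (n-k)) * (U k y - V k y)|
        ≤ (bcoef α 0 - bcoef α (n-1)) * M := by
      calc |∑ k ∈ Finset.Icc 1 (n-1), (bcoef α (n-k-1) - bcoef α (n-k)) * (U k y - V k y)|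
          ≤ ∑ k ∈ Finset.Icc 1 (n-1), |(bcoef α (n-k-1) - bcoef α (n-k)) * (U k y - V k y)| :=
            Finset.abs_sum_le_sum_abs _ _
        _ ≤ ∑ k ∈ Finset.Icc 1 (n-1), (bcoef α (n-k-1) - bcoef α (n-k)) * M := by
            apply Finset.sum_le_sum
            intro k hk
            rw [abs_mul, abs_of_nonneg (ha_nn k hk)]
            apply mul_le_mul_of_nonneg_left _ (ha_nn k hk)
            obtain ⟨_, hk2⟩ := Finset.mem_Icc.mp hk
            exact hWprev k (by omega) y
        _ = (bcoef α 0 - bcoef α (n-1)) * M := by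
            rw [← Finset.sum_mul, bcoef_telescope n hn1]
    have hfirst : |bcoef α (n-1) * (U 0 y - V 0 y)
            + ∑ k ∈ Finset.Icc 1 (n-1),
                (bcoef α (n-k-1) - bcoef α (n-k)) * (U k y - V k y)| ≤ M := by
      calc |_ + _| ≤ |bcoef α (n-1) * (U 0 y - V 0 y)|
            + |∑ k ∈ Finset.Icc 1 (n-1),
                (bcoef α (n-k-1) - bcoef α (n-k)) * (U k y - V k y)| := abs_add_le _ _
        _ ≤ bcoef α (n-1) * M + (bcoef α 0 - bcoef α (n-1)) * M := by
            refine add_le_add ?_ hsum_le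
            rw [abs_mul, abs_of_nonneg hb_nn]
            exact mul_le_mul_of_nonneg_left (hM0 y) hb_nn
        _ = M := by rw [bcoef_zero hα1]; ring
    have hpos : 0 ≤ c + 2 * Dy * Ω := by positivity
    calc (c + 2 * Dy * Ω) * |U n y - V n y|
        = |(c + 2 * Dy * Ω) * (U n y - V n y)| := by
          rw [abs_mul, abs_of_nonneg hpos]
      _ ≤ c * |bcoef α (n-1) * (U 0 y - V 0 y)
            + ∑ k ∈ Finset.Icc 1 (n-1),
                (bcoef α (n-k-1) - bcoef α (n-k)) * (U k y - V k y)| + Dy * |P| := by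
          rw [hre]
          refine (abs_add_le _ _).trans (add_le_add ?_ ?_)
          · rw [abs_mul, abs_of_nonneg hc.le]
          · rw [abs_mul, abs_of_nonneg hDnn]
      _ ≤ c * M + 2 * Dy * Ω * S := by
          refine add_le_add (mul_le_mul_of_nonneg_left hfirst hc.le) ?_
          calc Dy * |P| ≤ Dy * (2 * S * Ω) := mul_le_mul_of_nonneg_left hP_le hDnn
            _ = 2 * Dy * Ω * S := by ring
  -- epsilon argument: S ≤ M
  intro x
  suffices hSM : S ≤ M by exact (hS_ub x).trans hSM
  by_contra hlt
  push_neg at hlt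
  have hDmΩ : (0:ℝ) ≤ Dm*Ω := mul_nonneg hDm0 hΩ
  have hden : (0:ℝ) < 2*(c + 2*Dm*Ω) := by linarith
  set ε : ℝ := c*(S - M)/(2*(c + 2*Dm*Ω)) with hε_def
  have hε : 0 < ε := div_pos (mul_pos hc (by linarith)) hden
  have hεeq : ε * (2*(c + 2*Dm*Ω)) = c*(S - M) := div_mul_cancel₀ _ hden.ne'
  have hlt2 : S - ε < S := by linarith
  obtain ⟨a, ha, hy0⟩ := exists_lt_of_lt_csSup hrange_ne hlt2
  obtain ⟨y, rfl⟩ := ha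
  have hy : S - ε < |U n y - V n y| := hy0
  have hk := key y
  have hDnn : 0 ≤ D y ((n:ℝ)*τ) := hDpos y _ htn_mem
  have hDle : D y ((n:ℝ)*τ) ≤ Dm :=
    le_trans (le_trans (le_abs_self _) (hMD y _ htn_mem)) (le_max_left _ _)
  have h5 : (c + 2 * D y ((n:ℝ)*τ) * Ω) * (S - ε)
      < (c + 2 * D y ((n:ℝ)*τ) * Ω) * |U n y - V n y| := by
    apply mul_lt_mul_of_pos_left hy
    nlinarith [mul_nonneg hDnn hΩ]
  have h6 : D y ((n:ℝ)*τ) * (Ω * ε) ≤ Dm * (Ω * ε) :=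
    mul_le_mul_of_nonneg_right hDle (mul_nonneg hΩ hε.le)
  nlinarith [mul_pos hc hε, mul_nonneg hDm0 (mul_nonneg hΩ hε.le), h5, hk, h6, hεeq]

end
end

section
/- Let α ∈ (0,1), τ > 0 and let (f^n)_{n≥0} be any real sequence; write δ₁f^n := f^{n+1} − f^n. Then for every n ≥ 1 one has ∂_τ^α f^{n+1} − ∂_τ^α f^n = ^{RL}∂_τ^α (δ₁f)^n, i.e. the forward difference of the L1 discrete Caputo derivative equals the L1 discrete Riemann–Liouville derivative of the forward-differenced sequence. -/
open MeasureTheory Real Filter Set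

noncomputable section

/-- the forward difference of the L1 discrete Caputo derivative
equals the L1 discrete Riemann–Liouville derivative of the forward difference. -/
theorem caputo_diff_eq_rl_of_diff
    (α τ : ℝ) (hα : α ∈ Set.Ioo (0:ℝ) 1) (hτ : 0 < τ)
    (f : ℕ → ℝ) (n : ℕ) (hn : 1 ≤ n) :
    capD α τ f (n + 1) - capD α τ f n
      = rlD α τ (fun k => f (k + 1) - f k) n := by
  obtain ⟨m, rfl⟩ : ∃ m, n = m + 1 := ⟨n - 1, by omega⟩
  simp only [capD, rlD, Nat.add_sub_cancel]
  rw [← mul_sub]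
  congr 1
  have h1 : ∑ k ∈ Finset.Icc 1 (m + 1),
      (bcoef α (m + 1 + 1 - k - 1) - bcoef α (m + 1 + 1 - k)) * f k
      = ∑ i ∈ Finset.range (m + 1),
        (bcoef α (m - i) - bcoef α (m + 1 - i)) * f (i + 1) := by
    rw [← Finset.Ico_add_one_right_eq_Icc, Finset.sum_Ico_eq_sum_range]
    refine Finset.sum_congr (by norm_num) fun i hi => ?_
    simp only [Finset.mem_range] at hi
    rw [show m + 1 + 1 - (1 + i) - 1 = m - i from by omega,
      show m + 1 + 1 - (1 + i) = m + 1 - i from by omega,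
      show 1 + i = i + 1 from by omega]
  have h2 : ∑ k ∈ Finset.Icc 1 m,
      (bcoef α (m + 1 - k - 1) - bcoef α (m + 1 - k)) * f k
      = ∑ i ∈ Finset.range m,
        (bcoef α (m - i - 1) - bcoef α (m - i)) * f (i + 1) := by
    rw [← Finset.Ico_add_one_right_eq_Icc, Finset.sum_Ico_eq_sum_range]
    refine Finset.sum_congr (by norm_num) fun i hi => ?_
    simp only [Finset.mem_range] at hi
    rw [show m + 1 - (1 + i) - 1 = m - i - 1 from by omega,
      show m + 1 - (1 + i) = m - i from by omega,
      show 1 + i = i + 1 from by omega]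
  have h3 : ∑ k ∈ Finset.range (m + 1),
      (bcoef α (m + 1 - k - 1) - bcoef α (m + 1 - k)) * (f (k + 1) - f k)
      = (∑ i ∈ Finset.range (m + 1),
          (bcoef α (m - i) - bcoef α (m + 1 - i)) * f (i + 1))
        - ((∑ i ∈ Finset.range m,
            (bcoef α (m - i - 1) - bcoef α (m - i)) * f (i + 1))
          + (bcoef α m - bcoef α (m + 1)) * f 0) := by
    simp only [mul_sub]
    rw [Finset.sum_sub_distrib]
    congr 1
    · refine Finset.sum_congr rfl fun k hk => ?_
      rw [show m + 1 - k - 1 = m - k from by omega]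
    · rw [Finset.sum_range_succ']
      congr 1
      refine Finset.sum_congr rfl fun i hi => ?_
      rw [show m + 1 - (i + 1) - 1 = m - i - 1 from by omega,
        show m + 1 - (i + 1) = m - i from by omega]
  rw [h1, h2, h3]
  ring
end
end

section
/- Let α ∈ (0,1), τ > 0, T > 0, C̃ > 0, and let y : [0,T] → ℝ be continuous with |y(t) − y(s)| ≤ C̃ (1 + max{t,s}^{α−1}) |t − s| for all s, t ∈ [0,T]. Let I_τ[y] be the piecewise linear interpolant of y with nodes t_k = kτ. Then for every k ≥ 0 and every s ∈ (t_k, t_{k+1}) with t_{k+1} ≤ T: |I_τ[y](s) − y(s)| ≤ 2 C̃ ((s − t_k)(t_{k+1} − s)/τ) (1 + s^{α−1}). -/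
open MeasureTheory Real Filter Set

noncomputable section

/-- pointwise error of piecewise linear interpolation for
functions with the natural blow-up rate of the time modulus. -/
theorem piecewise_linear_interpolation_error
    (α τ T Ctil : ℝ) (y : ℝ → ℝ)
    (hα : α ∈ Set.Ioo (0:ℝ) 1) (hτ : 0 < τ) (hT : 0 < T) (hCtil : 0 < Ctil)
    (hy : ContinuousOn y (Set.Icc 0 T))
    (hmod : ∀ t ∈ Set.Icc (0:ℝ) T, ∀ s ∈ Set.Icc (0:ℝ) T,
      |y t - y s| ≤ Ctil * (1 + max t s ^ (α - 1)) * |t - s|) :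
    ∀ (k : ℕ) (s : ℝ), s ∈ Set.Ioo ((k : ℝ) * τ) (((k : ℝ) + 1) * τ) →
      ((k : ℝ) + 1) * τ ≤ T →
      |((s - (k : ℝ) * τ) / τ) * y (((k : ℝ) + 1) * τ)
          + ((((k : ℝ) + 1) * τ - s) / τ) * y ((k : ℝ) * τ) - y s|
        ≤ 2 * Ctil * ((s - (k : ℝ) * τ) * (((k : ℝ) + 1) * τ - s) / τ)
            * (1 + s ^ (α - 1)) := by
  rintro k s ⟨hs1, hs2⟩ hbT
  have ha0 : 0 ≤ (k : ℝ) * τ := by positivity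
  have hs0 : 0 < s := lt_of_le_of_lt ha0 hs1
  have hb0 : 0 < ((k : ℝ) + 1) * τ := lt_trans hs0 hs2
  have haT : (k : ℝ) * τ ∈ Set.Icc (0:ℝ) T := ⟨ha0, by nlinarith⟩
  have hsT : s ∈ Set.Icc (0:ℝ) T := ⟨hs0.le, by nlinarith⟩
  have hbT' : ((k : ℝ) + 1) * τ ∈ Set.Icc (0:ℝ) T := ⟨hb0.le, hbT⟩
  have h1 := hmod (((k : ℝ) + 1) * τ) hbT' s hsT
  have h2 := hmod s hsT ((k : ℝ) * τ) haT
  rw [max_eq_left hs2.le,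
    abs_of_nonneg (by linarith : (0:ℝ) ≤ ((k : ℝ) + 1) * τ - s)] at h1
  rw [max_eq_left hs1.le,
    abs_of_nonneg (by linarith : (0:ℝ) ≤ s - (k : ℝ) * τ)] at h2
  have hpow : (((k : ℝ) + 1) * τ) ^ (α - 1) ≤ s ^ (α - 1) :=
    Real.rpow_le_rpow_of_nonpos hs0 hs2.le (by linarith [hα.2])
  have hpow0 : 0 ≤ s ^ (α - 1) := Real.rpow_nonneg hs0.le _
  have key : ((s - (k : ℝ) * τ) / τ) * y (((k : ℝ) + 1) * τ)
      + ((((k : ℝ) + 1) * τ - s) / τ) * y ((k : ℝ) * τ) - y s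
      = ((s - (k : ℝ) * τ) / τ) * (y (((k : ℝ) + 1) * τ) - y s)
        + ((((k : ℝ) + 1) * τ - s) / τ) * (y ((k : ℝ) * τ) - y s) := by
    field_simp
    ring
  rw [key]
  have h1' : |y (((k : ℝ) + 1) * τ) - y s| ≤
      Ctil * (1 + s ^ (α - 1)) * (((k : ℝ) + 1) * τ - s) := by
    refine h1.trans ?_
    have hd : (0:ℝ) ≤ ((k : ℝ) + 1) * τ - s := by linarith
    gcongr
  have h2' : |y ((k : ℝ) * τ) - y s| ≤
      Ctil * (1 + s ^ (α - 1)) * (s - (k : ℝ) * τ) := by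
    rw [abs_sub_comm]; linarith
  have hc1 : 0 ≤ (s - (k : ℝ) * τ) / τ := div_nonneg (by linarith) hτ.le
  have hc2 : 0 ≤ (((k : ℝ) + 1) * τ - s) / τ := by
    apply div_nonneg (by linarith) hτ.le
  calc |((s - (k : ℝ) * τ) / τ) * (y (((k : ℝ) + 1) * τ) - y s)
        + ((((k : ℝ) + 1) * τ - s) / τ) * (y ((k : ℝ) * τ) - y s)|
      ≤ ((s - (k : ℝ) * τ) / τ) * |y (((k : ℝ) + 1) * τ) - y s|
        + ((((k : ℝ) + 1) * τ - s) / τ) * |y ((k : ℝ) * τ) - y s| := by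
        refine (abs_add_le _ _).trans ?_
        rw [abs_mul, abs_mul, abs_of_nonneg hc1, abs_of_nonneg hc2]
    _ ≤ ((s - (k : ℝ) * τ) / τ) * (Ctil * (1 + s ^ (α - 1)) * (((k : ℝ) + 1) * τ - s))
        + ((((k : ℝ) + 1) * τ - s) / τ) * (Ctil * (1 + s ^ (α - 1)) * (s - (k : ℝ) * τ)) := by
        gcongr
    _ = 2 * Ctil * ((s - (k : ℝ) * τ) * (((k : ℝ) + 1) * τ - s) / τ)
        * (1 + s ^ (α - 1)) := by field_simp; ring

end
end

section
/- Let α ∈ (0,1), τ ∈ (0,1), K > 0, N ∈ ℕ, and let R^1, …, R^N be nonnegative numbers with R^1 ≤ K and R^k ≤ K t_{k−1}^{α−1} τ^{1−α} for 2 ≤ k ≤ N, where t_j := jτ. Then there exists a constant C > 0 depending only on α and K such that (τ^α/Γ(α)) Σ_{k=0}^{n−1} (n−k)^{α−1} R^{k+1} ≤ C t_n^{2α−1} τ^{1−α} for all 1 ≤ n ≤ N. -/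
open MeasureTheory Real Filter Set

noncomputable section

lemma myaux_bernoulli {α : ℝ} (hα0 : 0 < α) (hα1 : α < 1) (i : ℕ) :
    α * ((i : ℝ) + 1) ^ (α - 1) ≤ ((i : ℝ) + 1) ^ α - (i : ℝ) ^ α := by
  have h1 : (0:ℝ) < (i:ℝ) + 1 := by positivity
  set s : ℝ := -(1 / ((i:ℝ) + 1)) with hs
  have hs1 : -1 ≤ s := by
    rw [hs, neg_le_neg_iff]
    rw [div_le_one h1]
    linarith [Nat.cast_nonneg (α := ℝ) i]
  have hbern := rpow_one_add_le_one_add_mul_self hs1 hα0.le hα1.le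
  have hval : (1 : ℝ) + s = (i:ℝ) / ((i:ℝ) + 1) := by
    rw [eq_div_iff h1.ne', hs, add_mul, neg_mul, one_div, inv_mul_cancel₀ h1.ne']; ring
  have hi : (i:ℝ) ^ α = ((i:ℝ) + 1) ^ α * (1 + s) ^ α := by
    rw [hval, ← Real.mul_rpow h1.le (by positivity)]
    congr 1
    field_simp
  have hpow : ((i:ℝ) + 1) ^ α / ((i:ℝ) + 1) = ((i:ℝ) + 1) ^ (α - 1) := by
    rw [Real.rpow_sub_one h1.ne']
  have hb : ((i:ℝ) + 1) ^ α * (1 + s) ^ α ≤ ((i:ℝ) + 1) ^ α * (1 + α * s) := by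
    apply mul_le_mul_of_nonneg_left hbern (by positivity)
  have : ((i:ℝ) + 1) ^ α * (1 + α * s) = ((i:ℝ)+1) ^ α - α * (((i:ℝ)+1) ^ α / ((i:ℝ)+1)) := by
    rw [hs]; ring
  rw [hpow] at this
  nlinarith [hi, hb]

lemma myaux_sum {α : ℝ} (hα0 : 0 < α) (hα1 : α < 1) (m : ℕ) :
    ∑ i ∈ Finset.range m, ((i : ℝ) + 1) ^ (α - 1) ≤ (m : ℝ) ^ α / α := by
  have key : ∀ i ∈ Finset.range m, ((i : ℝ) + 1) ^ (α - 1)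
      ≤ ((((i:ℕ)+1 : ℕ) : ℝ) ^ α - ((i:ℕ) : ℝ) ^ α) / α := by
    intro i _
    rw [le_div_iff₀ hα0, mul_comm]
    push_cast
    exact myaux_bernoulli hα0 hα1 i
  calc ∑ i ∈ Finset.range m, ((i : ℝ) + 1) ^ (α - 1)
      ≤ ∑ i ∈ Finset.range m, ((((i:ℕ)+1 : ℕ) : ℝ) ^ α - ((i:ℕ) : ℝ) ^ α) / α :=
        Finset.sum_le_sum key
    _ = (∑ i ∈ Finset.range m, ((((i:ℕ)+1 : ℕ) : ℝ) ^ α - ((i:ℕ) : ℝ) ^ α)) / α := by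
        rw [Finset.sum_div]
    _ = ((m : ℝ) ^ α - ((0:ℕ) : ℝ) ^ α) / α := by
        rw [Finset.sum_range_sub (fun j : ℕ => ((j : ℕ) : ℝ) ^ α)]
    _ = (m : ℝ) ^ α / α := by
        norm_num [Real.zero_rpow hα0.ne']

lemma myaux_conv {α : ℝ} (hα0 : 0 < α) (hα1 : α < 1) {a b c : ℝ} (ha : 1 ≤ a) (hb : 1 ≤ b)
    (hc : a + b = c) :
    b ^ (α - 1) * a ^ (α - 1) ≤ 2 * c ^ (α - 1) * (a ^ (α - 1) + b ^ (α - 1)) := by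
  have hapos : (0:ℝ) < a := by linarith
  have hbpos : (0:ℝ) < b := by linarith
  have hcpos : (0:ℝ) < c := by linarith
  have key : ∀ x y : ℝ, 0 < x → x ≤ y → x + y = c → y ^ (α - 1) ≤ 2 * c ^ (α - 1) := by
    intro x y hx hxy hsum
    have h2 : c / 2 ≤ y := by linarith
    have h3 : y ^ (α - 1) ≤ (c / 2) ^ (α - 1) :=
      Real.rpow_le_rpow_of_nonpos (by positivity) h2 (by linarith)
    have hdiv : (c / 2 : ℝ) ^ (α - 1) = c ^ (α - 1) / 2 ^ (α - 1) :=
      Real.div_rpow hcpos.le (by norm_num) (α - 1)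
    have h2a : (1:ℝ) / 2 ≤ (2:ℝ) ^ (α - 1) := by
      have h := Real.rpow_le_rpow_of_exponent_le one_le_two (by linarith : (-1:ℝ) ≤ α - 1)
      calc (1:ℝ)/2 = (2:ℝ) ^ (-1:ℝ) := by
            rw [Real.rpow_neg_one]; norm_num
        _ ≤ (2:ℝ) ^ (α - 1) := h
    have hcp : (0:ℝ) < c ^ (α - 1) := Real.rpow_pos_of_pos hcpos _
    have h2b : c ^ (α - 1) / 2 ^ (α - 1) ≤ 2 * c ^ (α - 1) := by
      rw [div_le_iff₀ (by positivity)]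
      nlinarith
    linarith [hdiv ▸ h3]
  have hanon : (0:ℝ) ≤ a ^ (α - 1) := (Real.rpow_pos_of_pos hapos _).le
  have hbnon : (0:ℝ) ≤ b ^ (α - 1) := (Real.rpow_pos_of_pos hbpos _).le
  rcases le_total a b with h | h
  · have hb2 := key a b hapos h hc
    nlinarith
  · have ha2 := key b a hbpos h (by linarith)
    nlinarith

/-- discrete fractional integral bound of the L1 truncation errors. -/
theorem discrete_fractional_integral_of_truncation
    (α K : ℝ) (hα : α ∈ Set.Ioo (0:ℝ) 1) (hK : 0 < K) :
    ∃ C : ℝ, 0 < C ∧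
      ∀ (τ : ℝ) (N : ℕ) (R : ℕ → ℝ),
        τ ∈ Set.Ioo (0:ℝ) 1 →
        (∀ k : ℕ, 1 ≤ k → k ≤ N → 0 ≤ R k) →
        R 1 ≤ K →
        (∀ k : ℕ, 2 ≤ k → k ≤ N →
          R k ≤ K * (((k : ℝ) - 1) * τ) ^ (α - 1) * τ ^ (1 - α)) →
        ∀ n : ℕ, 1 ≤ n → n ≤ N →
          (τ ^ α / Real.Gamma α) *
              ∑ k ∈ Finset.range n, ((n - k : ℕ) : ℝ) ^ (α - 1) * R (k + 1)
            ≤ C * ((n : ℝ) * τ) ^ (2 * α - 1) * τ ^ (1 - α) := by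
  obtain ⟨hα0, hα1⟩ := hα
  have hΓ : 0 < Real.Gamma α := Real.Gamma_pos_of_pos hα0
  refine ⟨K * (1 + 4 / α) / Real.Gamma α, by positivity, ?_⟩
  rintro τ N R ⟨hτ0, hτ1⟩ hR0 hR1 hRk n hn1 hnN
  obtain ⟨m, rfl⟩ : ∃ m, n = m + 1 := ⟨n - 1, (Nat.succ_pred_eq_of_pos hn1).symm⟩
  set nR : ℝ := ((m : ℝ) + 1) with hnR
  have hnR1 : (1:ℝ) ≤ nR := by rw [hnR]; linarith [Nat.cast_nonneg (α := ℝ) m]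
  have hnRpos : (0:ℝ) < nR := by linarith
  -- bound the sum
  have hterm : ∀ i ∈ Finset.range m,
      ((m + 1 - (i + 1) : ℕ) : ℝ) ^ (α - 1) * R (i + 1 + 1)
        ≤ 2 * K * nR ^ (α - 1) * (((i:ℝ) + 1) ^ (α - 1) + ((m:ℝ) - i) ^ (α - 1)) := by
    intro i hi
    have him : i < m := Finset.mem_range.mp hi
    have hcast : ((m + 1 - (i + 1) : ℕ) : ℝ) = (m : ℝ) - i := by
      have h1 : m + 1 - (i + 1) = m - i := by omega
      rw [h1, Nat.cast_sub him.le]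
    have hb1 : (1:ℝ) ≤ (m:ℝ) - i := by
      have : (i:ℝ) + 1 ≤ (m:ℝ) := by exact_mod_cast him
      linarith
    have hbpos : (0:ℝ) < ((m:ℝ) - i) ^ (α - 1) := Real.rpow_pos_of_pos (by linarith) _
    have hR : R (i + 2) ≤ K * ((i:ℝ) + 1) ^ (α - 1) := by
      have h := hRk (i + 2) (by omega) (by omega)
      have hval : (((i + 2 : ℕ) : ℝ) - 1) * τ = ((i:ℝ) + 1) * τ := by push_cast; ring
      rw [hval] at h
      have hmul : (((i:ℝ) + 1) * τ) ^ (α - 1) * τ ^ (1 - α) = ((i:ℝ) + 1) ^ (α - 1) := by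
        rw [Real.mul_rpow (by positivity) hτ0.le, mul_assoc, ← Real.rpow_add hτ0]
        norm_num
      calc R (i + 2) ≤ K * (((i:ℝ) + 1) * τ) ^ (α - 1) * τ ^ (1 - α) := h
        _ = K * ((i:ℝ) + 1) ^ (α - 1) := by rw [mul_assoc, hmul]
    have hR0' : 0 ≤ R (i + 2) := hR0 (i + 2) (by omega) (by omega)
    rw [hcast]
    calc ((m:ℝ) - i) ^ (α - 1) * R (i + 1 + 1)
        ≤ ((m:ℝ) - i) ^ (α - 1) * (K * ((i:ℝ) + 1) ^ (α - 1)) := by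
          exact mul_le_mul_of_nonneg_left hR hbpos.le
      _ = K * (((m:ℝ) - i) ^ (α - 1) * ((i:ℝ) + 1) ^ (α - 1)) := by ring
      _ ≤ K * (2 * nR ^ (α - 1) * (((i:ℝ) + 1) ^ (α - 1) + ((m:ℝ) - i) ^ (α - 1))) := by
          apply mul_le_mul_of_nonneg_left _ hK.le
          exact myaux_conv hα0 hα1 (by linarith [Nat.cast_nonneg (α := ℝ) i]) hb1
            (by simp [hnR]; ring)
      _ = 2 * K * nR ^ (α - 1) * (((i:ℝ) + 1) ^ (α - 1) + ((m:ℝ) - i) ^ (α - 1)) := by ring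
  have hsumb : ∑ i ∈ Finset.range m, ((m:ℝ) - i) ^ (α - 1)
      = ∑ i ∈ Finset.range m, ((i:ℝ) + 1) ^ (α - 1) := by
    rw [← Finset.sum_range_reflect (fun j => ((j:ℝ) + 1) ^ (α - 1)) m]
    apply Finset.sum_congr rfl
    intro i hi
    have him : i < m := Finset.mem_range.mp hi
    congr 1
    rw [Nat.cast_sub (by omega), Nat.cast_sub (by omega)]
    push_cast
    ring
  have hAsum : ∑ i ∈ Finset.range m, ((i:ℝ) + 1) ^ (α - 1) ≤ nR ^ α / α := by
    refine (myaux_sum hα0 hα1 m).trans ?_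
    have hmn : ((m:ℝ)) ^ α ≤ nR ^ α :=
      Real.rpow_le_rpow (Nat.cast_nonneg m) (by rw [hnR]; linarith) hα0.le
    gcongr
  have hsum : ∑ k ∈ Finset.range (m + 1), ((m + 1 - k : ℕ) : ℝ) ^ (α - 1) * R (k + 1)
      ≤ K * (1 + 4 / α) * nR ^ (2 * α - 1) := by
    rw [Finset.sum_range_succ']
    have h0 : ((m + 1 - 0 : ℕ) : ℝ) ^ (α - 1) * R (0 + 1) ≤ K * nR ^ (2 * α - 1) := by
      have hA : ((m + 1 - 0 : ℕ) : ℝ) ^ (α - 1) = nR ^ (α - 1) := by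
        norm_num [hnR]
      rw [hA]
      have h1 : nR ^ (α - 1) ≤ nR ^ (2 * α - 1) :=
        Real.rpow_le_rpow_of_exponent_le hnR1 (by linarith)
      have h2 : 0 ≤ nR ^ (α - 1) := (Real.rpow_pos_of_pos hnRpos _).le
      calc nR ^ (α - 1) * R (0 + 1) ≤ nR ^ (α - 1) * K := by
            exact mul_le_mul_of_nonneg_left hR1 h2
        _ ≤ nR ^ (2 * α - 1) * K := by
            exact mul_le_mul_of_nonneg_right h1 hK.le
        _ = K * nR ^ (2 * α - 1) := by ring
    have htail : ∑ i ∈ Finset.range m, ((m + 1 - (i + 1) : ℕ) : ℝ) ^ (α - 1) * R (i + 1 + 1)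
        ≤ 4 * K / α * nR ^ (2 * α - 1) := by
      calc ∑ i ∈ Finset.range m, ((m + 1 - (i + 1) : ℕ) : ℝ) ^ (α - 1) * R (i + 1 + 1)
          ≤ ∑ i ∈ Finset.range m,
              2 * K * nR ^ (α - 1) * (((i:ℝ) + 1) ^ (α - 1) + ((m:ℝ) - i) ^ (α - 1)) :=
            Finset.sum_le_sum hterm
        _ = 2 * K * nR ^ (α - 1) *
              (∑ i ∈ Finset.range m, ((i:ℝ) + 1) ^ (α - 1)
                + ∑ i ∈ Finset.range m, ((m:ℝ) - i) ^ (α - 1)) := by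
            rw [← Finset.mul_sum, Finset.sum_add_distrib]
        _ ≤ 2 * K * nR ^ (α - 1) * (nR ^ α / α + nR ^ α / α) := by
            apply mul_le_mul_of_nonneg_left _ (by positivity)
            rw [hsumb]
            linarith
        _ = 4 * K / α * (nR ^ (α - 1) * nR ^ α) := by ring
        _ = 4 * K / α * nR ^ (2 * α - 1) := by
            rw [← Real.rpow_add hnRpos]
            ring_nf
    have hring : K * (1 + 4 / α) * nR ^ (2 * α - 1)
        = K * nR ^ (2 * α - 1) + 4 * K / α * nR ^ (2 * α - 1) := by
      field_simp
    linarith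
  -- conclude
  have hrhs : K * (1 + 4 / α) / Real.Gamma α * (((m + 1 : ℕ) : ℝ) * τ) ^ (2 * α - 1) * τ ^ (1 - α)
      = τ ^ α / Real.Gamma α * (K * (1 + 4 / α) * nR ^ (2 * α - 1)) := by
    rw [Real.mul_rpow (by positivity) hτ0.le]
    have hτe : τ ^ (2 * α - 1) * τ ^ (1 - α) = τ ^ α := by
      rw [← Real.rpow_add hτ0]; ring_nf
    push_cast
    rw [← hnR]
    calc K * (1 + 4 / α) / Real.Gamma α * (nR ^ (2 * α - 1) * τ ^ (2 * α - 1)) * τ ^ (1 - α)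
        = K * (1 + 4 / α) / Real.Gamma α * nR ^ (2 * α - 1) * (τ ^ (2 * α - 1) * τ ^ (1 - α)) := by
          ring
      _ = τ ^ α / Real.Gamma α * (K * (1 + 4 / α) * nR ^ (2 * α - 1)) := by
          rw [hτe]; ring
  rw [hrhs]
  apply mul_le_mul_of_nonneg_left hsum (by positivity)

end
end

section
/- Let s ∈ (0,1) and set c_s := ( ∫_{ℝ∖{0}} (1 − cos z) |z|^{−1−2s} dz )^{−1}; this integral is finite and strictly positive. Then for every x ∈ ℝ, the principal value integral converges and lim_{ε→0⁺} c_s ∫_{{y ∈ ℝ : |x−y| > ε}} (sin x − sin y)/|x−y|^{1+2s} dy = sin x. In other words, sin is an eigenfunction of the one-dimensional fractional Laplacian (−Δ)^s with eigenvalue 1. -/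
open MeasureTheory Real Filter Set

noncomputable section

private lemma memb_set (ε : ℝ) : {z : ℝ | ε < |z|} = Iio (-ε) ∪ Ioi ε := by
  ext z
  simp only [mem_setOf_eq, mem_union, mem_Iio, mem_Ioi, lt_abs]
  constructor
  · rintro (h | h); · right; exact h
    · left; linarith
  · rintro (h | h); · right; linarith
    · left; exact h

private lemma meas_set (ε : ℝ) : MeasurableSet {z : ℝ | ε < |z|} := by
  rw [memb_set]; exact measurableSet_Iio.union measurableSet_Ioi

private lemma rpow_int_on (p ε : ℝ) (hp : p < -1) (hε : 0 < ε) :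
    IntegrableOn (fun z : ℝ => |z| ^ p) {z : ℝ | ε < |z|} := by
  rw [memb_set]
  apply IntegrableOn.union
  · have h1 : IntegrableOn (fun z : ℝ => |z| ^ p) (Ioi ε) :=
      (integrableOn_Ioi_rpow_of_lt hp hε).congr_fun
        (fun z hz => by rw [abs_of_pos (hε.trans hz)]) measurableSet_Ioi
    have h2 := (MeasurePreserving.integrableOn_comp_preimage
      (Measure.measurePreserving_neg (volume : Measure ℝ))
      (MeasurableEquiv.neg ℝ).measurableEmbedding
      (f := fun z : ℝ => |z| ^ p) (s := Ioi ε)).2 h1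
    have hset : (Neg.neg : ℝ → ℝ) ⁻¹' (Ioi ε) = Iio (-ε) := by
      ext z; simp only [mem_preimage, mem_Ioi, mem_Iio]; constructor <;> intro h <;> linarith
    have hfun : ((fun z : ℝ => |z| ^ p) ∘ Neg.neg) = fun z : ℝ => |z| ^ p := by
      funext z; simp [abs_neg]
    rwa [hset, hfun] at h2
  · exact (integrableOn_Ioi_rpow_of_lt hp hε).congr_fun
      (fun z hz => by rw [abs_of_pos (hε.trans hz)]) measurableSet_Ioi

private lemma frac_int_on {s : ℝ} (hs0 : 0 < s) {ε : ℝ} (hε : 0 < ε) (F : ℝ → ℝ)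
    (hFmeas : Measurable F) (hFbd : ∀ z, |F z| ≤ 2) :
    IntegrableOn (fun z : ℝ => F z / |z| ^ (1 + 2 * s)) {z : ℝ | ε < |z|} := by
  have hint := (rpow_int_on (-(1 + 2 * s)) ε (by linarith) hε).const_mul 2
  apply hint.mono' ((hFmeas.div ((measurable_abs).pow_const _)).aestronglyMeasurable.restrict)
  rw [ae_restrict_iff' (meas_set ε)]
  filter_upwards with z hz
  have h0 : (0:ℝ) < |z| := lt_trans hε hz
  have hp : (0:ℝ) < |z| ^ (1 + 2 * s) := Real.rpow_pos_of_pos h0 _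
  rw [Real.norm_eq_abs, Pi.div_apply, abs_div, abs_of_pos hp]
  rw [div_le_iff₀ hp, Real.rpow_neg h0.le, mul_assoc, inv_mul_cancel₀ (ne_of_gt hp), mul_one]
  exact hFbd z

private lemma odd_integral_zero (s ε : ℝ) :
    ∫ z in {z : ℝ | ε < |z|}, Real.sin z / |z| ^ (1 + 2 * s) = 0 := by
  set G : ℝ → ℝ :=
    Set.indicator {z : ℝ | ε < |z|} (fun z => Real.sin z / |z| ^ (1 + 2 * s)) with hG
  have h1 : ∫ z in {z : ℝ | ε < |z|}, Real.sin z / |z| ^ (1 + 2 * s) = ∫ z, G z :=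
    (integral_indicator (meas_set ε)).symm
  have hodd : ∀ z, G (-z) = -G z := by
    intro z
    by_cases hz : z ∈ {z : ℝ | ε < |z|}
    · have hz' : (-z) ∈ {z : ℝ | ε < |z|} := by
        simpa only [mem_setOf_eq, abs_neg] using hz
      rw [hG, Set.indicator_of_mem hz, Set.indicator_of_mem hz']
      rw [abs_neg, Real.sin_neg, neg_div]
    · have hz' : (-z) ∉ {z : ℝ | ε < |z|} := by
        simpa only [mem_setOf_eq, abs_neg] using hz
      rw [hG, Set.indicator_of_notMem hz, Set.indicator_of_notMem hz', neg_zero]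
  have h2 : ∫ z, G z = ∫ z, G (-z) := (integral_neg_eq_self G volume).symm
  have h3 : ∫ z, G (-z) = -∫ z, G z := by
    simp_rw [hodd]
    exact integral_neg G
  rw [h1]
  linarith [h2.trans h3]

private lemma f_meas (s : ℝ) :
    Measurable (fun z : ℝ => (1 - Real.cos z) * |z| ^ (-(1 + 2 * s))) :=
  ((measurable_const.sub Real.continuous_cos.measurable).mul
    ((measurable_abs).pow_const _))

private lemma key_integrable {s : ℝ} (hs0 : 0 < s) (hs1 : s < 1) :
    Integrable (fun z : ℝ => (1 - Real.cos z) * |z| ^ (-(1 + 2 * s))) := by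
  set f : ℝ → ℝ := fun z => (1 - Real.cos z) * |z| ^ (-(1 + 2 * s)) with hf
  have hmeas : Measurable f := f_meas s
  have h1 : IntegrableOn f (Ioc (0:ℝ) 1) := by
    have hint : IntegrableOn (fun z : ℝ => z ^ (1 - 2 * s)) (Ioc (0:ℝ) 1) :=
      (intervalIntegrable_iff_integrableOn_Ioc_of_le zero_le_one).1
        (intervalIntegral.intervalIntegrable_rpow' (by linarith))
    apply hint.mono' (hmeas.aestronglyMeasurable.restrict)
    rw [ae_restrict_iff' measurableSet_Ioc]
    filter_upwards with z hz
    obtain ⟨hz0, hz1⟩ := hz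
    have habs : |z| = z := abs_of_pos hz0
    have hc1 : Real.cos z ≤ 1 := Real.cos_le_one z
    have hc2 : 1 - z ^ 2 / 2 ≤ Real.cos z := Real.one_sub_sq_div_two_le_cos
    have hrnn : (0:ℝ) ≤ z ^ (-(1 + 2 * s)) := Real.rpow_nonneg hz0.le _
    rw [hf]
    simp only [habs, Real.norm_eq_abs]
    rw [abs_of_nonneg (mul_nonneg (by linarith) hrnn)]
    have key : (1 - Real.cos z) * z ^ (-(1 + 2 * s)) ≤ z ^ (2:ℝ) * z ^ (-(1 + 2 * s)) := by
      apply mul_le_mul_of_nonneg_right _ hrnn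
      rw [Real.rpow_two]
      nlinarith [sq_nonneg z]
    calc (1 - Real.cos z) * z ^ (-(1 + 2 * s)) ≤ z ^ (2:ℝ) * z ^ (-(1 + 2 * s)) := key
      _ = z ^ (1 - 2 * s) := by
          rw [← Real.rpow_add hz0]; ring_nf
  have h2 : IntegrableOn f (Ioi (1:ℝ)) := by
    have hint : IntegrableOn (fun z : ℝ => 2 * z ^ (-(1 + 2 * s))) (Ioi (1:ℝ)) :=
      (integrableOn_Ioi_rpow_of_lt (by linarith) one_pos).const_mul 2
    apply hint.mono' (hmeas.aestronglyMeasurable.restrict)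
    rw [ae_restrict_iff' measurableSet_Ioi]
    filter_upwards with z hz
    have hz0 : (0:ℝ) < z := lt_trans one_pos hz
    have habs : |z| = z := abs_of_pos hz0
    have hc1 : Real.cos z ≤ 1 := Real.cos_le_one z
    have hc2 : -1 ≤ Real.cos z := Real.neg_one_le_cos z
    have hrnn : (0:ℝ) ≤ z ^ (-(1 + 2 * s)) := Real.rpow_nonneg hz0.le _
    rw [hf]
    simp only [habs, Real.norm_eq_abs]
    rw [abs_of_nonneg (mul_nonneg (by linarith) hrnn)]
    exact mul_le_mul_of_nonneg_right (by linarith) hrnn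
  have hIoi : IntegrableOn f (Ioi (0:ℝ)) := by
    rw [← Set.Ioc_union_Ioi_eq_Ioi (zero_le_one)]
    exact h1.union h2
  have hIci : IntegrableOn f (Ici (0:ℝ)) := by
    rwa [integrableOn_Ici_iff_integrableOn_Ioi]
  have hIic : IntegrableOn f (Iic (0:ℝ)) := by
    have h2 := (MeasurePreserving.integrableOn_comp_preimage
      (Measure.measurePreserving_neg (volume : Measure ℝ))
      (MeasurableEquiv.neg ℝ).measurableEmbedding
      (f := f) (s := Ici (0:ℝ))).2 hIci
    have hset : (Neg.neg : ℝ → ℝ) ⁻¹' (Ici (0:ℝ)) = Iic 0 := by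
      ext z; simp only [mem_preimage, mem_Ici, mem_Iic]; constructor <;> intro h <;> linarith
    have hfun : (f ∘ Neg.neg) = f := by
      funext z; simp [hf, abs_neg, Real.cos_neg]
    rwa [hset, hfun] at h2
  have : IntegrableOn f univ := by
    rw [← Set.Iic_union_Ioi (a := (0:ℝ))]
    exact hIic.union hIoi
  rwa [integrableOn_univ] at this

private lemma key_pos {s : ℝ} (hs0 : 0 < s) (hs1 : s < 1)
    (hInt : Integrable (fun z : ℝ => (1 - Real.cos z) * |z| ^ (-(1 + 2 * s)))) :
    0 < ∫ z : ℝ, (1 - Real.cos z) * |z| ^ (-(1 + 2 * s)) := by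
  have hnn : 0 ≤ fun z : ℝ => (1 - Real.cos z) * |z| ^ (-(1 + 2 * s)) := fun z =>
    mul_nonneg (by linarith [Real.cos_le_one z]) (Real.rpow_nonneg (abs_nonneg z) _)
  rw [integral_pos_iff_support_of_nonneg hnn hInt]
  have hsub : Ioo (0:ℝ) 1 ⊆ Function.support
      (fun z : ℝ => (1 - Real.cos z) * |z| ^ (-(1 + 2 * s))) := by
    intro z hz
    have hcos : Real.cos z < 1 := by
      have := Real.strictAntiOn_cos ⟨le_refl (0:ℝ), Real.pi_pos.le⟩
        ⟨hz.1.le, by linarith [Real.pi_gt_three, hz.2]⟩ hz.1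
      rwa [Real.cos_zero] at this
    have hr : (0:ℝ) < |z| ^ (-(1 + 2 * s)) :=
      Real.rpow_pos_of_pos (abs_pos.2 (ne_of_gt hz.1)) _
    exact ne_of_gt (mul_pos (by linarith) hr)
  calc (0:ENNReal) < volume (Ioo (0:ℝ) 1) := by simp [Real.volume_Ioo]
    _ ≤ _ := measure_mono hsub

private lemma part3 {s : ℝ} (hs0 : 0 < s) (hs1 : s < 1) (x : ℝ) {ε : ℝ} (hε : 0 < ε) :
    IntegrableOn (fun y : ℝ => (Real.sin x - Real.sin y) / |x - y| ^ (1 + 2 * s))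
      {y : ℝ | ε < |x - y|} ∧
    ∫ y in {y : ℝ | ε < |x - y|}, (Real.sin x - Real.sin y) / |x - y| ^ (1 + 2 * s)
      = Real.sin x * ∫ z in {z : ℝ | ε < |z|},
          (1 - Real.cos z) * |z| ^ (-(1 + 2 * s)) := by
  have hMP : MeasurePreserving (fun z : ℝ => x - z) volume volume :=
    Measure.measurePreserving_sub_left volume x
  have hemb : MeasurableEmbedding (fun z : ℝ => x - z) :=
    (MeasurableEquiv.subLeft x).measurableEmbedding
  have hpre : (fun z : ℝ => x - z) ⁻¹' {y : ℝ | ε < |x - y|} = {z : ℝ | ε < |z|} := by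
    ext z; simp [sub_sub_cancel]
  have hFT : ((fun y : ℝ => (Real.sin x - Real.sin y) / |x - y| ^ (1 + 2 * s)) ∘
      (fun z : ℝ => x - z))
      = fun z : ℝ => (Real.sin x - Real.sin (x - z)) / |z| ^ (1 + 2 * s) := by
    funext z; simp [sub_sub_cancel]
  have hbd : ∀ z : ℝ, |Real.sin x - Real.sin (x - z)| ≤ 2 := by
    intro z
    have h1 := Real.neg_one_le_sin x
    have h2 := Real.sin_le_one x
    have h3 := Real.neg_one_le_sin (x - z)
    have h4 := Real.sin_le_one (x - z)
    rw [abs_le]; constructor <;> linarith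
  have hImeas : Measurable (fun z : ℝ => Real.sin x - Real.sin (x - z)) :=
    measurable_const.sub (Real.continuous_sin.measurable.comp (measurable_const.sub measurable_id))
  have hIset : IntegrableOn
      (fun z : ℝ => (Real.sin x - Real.sin (x - z)) / |z| ^ (1 + 2 * s))
      {z : ℝ | ε < |z|} := frac_int_on hs0 hε _ hImeas hbd
  have hInt1 : IntegrableOn (fun y : ℝ => (Real.sin x - Real.sin y) / |x - y| ^ (1 + 2 * s))
      {y : ℝ | ε < |x - y|} := by
    rw [← MeasurePreserving.integrableOn_comp_preimage hMP hemb, hpre, hFT]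
    exact hIset
  refine ⟨hInt1, ?_⟩
  have hsub : ∫ y in {y : ℝ | ε < |x - y|},
      (Real.sin x - Real.sin y) / |x - y| ^ (1 + 2 * s)
      = ∫ z in {z : ℝ | ε < |z|},
          (Real.sin x - Real.sin (x - z)) / |z| ^ (1 + 2 * s) := by
    rw [← hMP.setIntegral_preimage_emb hemb
      (fun y : ℝ => (Real.sin x - Real.sin y) / |x - y| ^ (1 + 2 * s))
      {y : ℝ | ε < |x - y|}, hpre]
    simp only [sub_sub_cancel]
  rw [hsub]
  have hdecomp : (fun z : ℝ => (Real.sin x - Real.sin (x - z)) / |z| ^ (1 + 2 * s))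
      = fun z : ℝ => Real.sin x * ((1 - Real.cos z) * |z| ^ (-(1 + 2 * s)))
          + Real.cos x * (Real.sin z / |z| ^ (1 + 2 * s)) := by
    funext z
    rw [Real.sin_sub, Real.rpow_neg (abs_nonneg z)]
    simp only [div_eq_mul_inv]
    ring
  rw [hdecomp]
  have hg1 : IntegrableOn
      (fun z : ℝ => Real.sin x * ((1 - Real.cos z) * |z| ^ (-(1 + 2 * s))))
      {z : ℝ | ε < |z|} := ((key_integrable hs0 hs1).integrableOn).const_mul _
  have hg2 : IntegrableOn
      (fun z : ℝ => Real.cos x * (Real.sin z / |z| ^ (1 + 2 * s)))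
      {z : ℝ | ε < |z|} :=
    (frac_int_on hs0 hε Real.sin Real.continuous_sin.measurable
      (fun z => by linarith [Real.abs_sin_le_one z])).const_mul _
  rw [integral_add hg1 hg2, integral_const_mul, integral_const_mul, odd_integral_zero,
    mul_zero, add_zero]

/-- `sin` is an eigenfunction of the 1D fractional Laplacian
with eigenvalue 1. -/
theorem sin_eigenfunction_fractionalLaplacian
    (s : ℝ) (hs : s ∈ Set.Ioo (0:ℝ) 1) :
    MeasureTheory.Integrable (fun z : ℝ => (1 - Real.cos z) * |z| ^ (-(1 + 2 * s))) ∧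
    0 < ∫ z : ℝ, (1 - Real.cos z) * |z| ^ (-(1 + 2 * s)) ∧
    ∀ x : ℝ,
      (∀ ε : ℝ, 0 < ε →
        MeasureTheory.IntegrableOn
          (fun y : ℝ => (Real.sin x - Real.sin y) / |x - y| ^ (1 + 2 * s))
          {y : ℝ | ε < |x - y|}) ∧
      Filter.Tendsto
        (fun ε : ℝ =>
          (∫ z : ℝ, (1 - Real.cos z) * |z| ^ (-(1 + 2 * s)))⁻¹ *
            ∫ y in {y : ℝ | ε < |x - y|},
              (Real.sin x - Real.sin y) / |x - y| ^ (1 + 2 * s))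
        (nhdsWithin 0 (Set.Ioi 0)) (nhds (Real.sin x)) := by
  obtain ⟨hs0, hs1⟩ := hs
  have hInt := key_integrable hs0 hs1
  have hPos := key_pos hs0 hs1 hInt
  refine ⟨hInt, hPos, fun x => ⟨fun ε hε => (part3 hs0 hs1 x hε).1, ?_⟩⟩
  set f : ℝ → ℝ := fun z => (1 - Real.cos z) * |z| ^ (-(1 + 2 * s)) with hf
  set C : ℝ := ∫ z : ℝ, f z with hC
  have hCne : C ≠ 0 := ne_of_gt hPos
  have hR : Tendsto (fun ε : ℝ => ∫ z in {z : ℝ | ε < |z|}ᶜ, f z)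
      (nhdsWithin 0 (Set.Ioi 0)) (nhds 0) := by
    apply hInt.tendsto_setIntegral_nhds_zero
    have hseq : (fun ε : ℝ => volume {z : ℝ | ε < |z|}ᶜ)
        = fun ε : ℝ => ENNReal.ofReal (ε - -ε) := by
      funext ε
      have : {z : ℝ | ε < |z|}ᶜ = Icc (-ε) ε := by
        ext z; simp [not_lt, abs_le]
      rw [this, Real.volume_Icc]
    show Tendsto (fun ε : ℝ => volume {z : ℝ | ε < |z|}ᶜ)
      (nhdsWithin 0 (Set.Ioi 0)) (nhds 0)
    rw [hseq]
    have h1 : Tendsto (fun ε : ℝ => ε - -ε) (nhds (0:ℝ)) (nhds 0) := by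
      have : Tendsto (fun ε : ℝ => ε - -ε) (nhds 0) (nhds (0 - -0)) := (continuous_id.sub continuous_id.neg).tendsto (0:ℝ)
      simpa using this
    have := (ENNReal.continuous_ofReal.tendsto 0).comp
      (h1.mono_left (nhdsWithin_le_nhds (s := Set.Ioi (0:ℝ))))
    simpa [Function.comp_def] using this
  have hlim : Tendsto (fun ε : ℝ => C⁻¹ * (Real.sin x * (C - ∫ z in {z : ℝ | ε < |z|}ᶜ, f z)))
      (nhdsWithin 0 (Set.Ioi 0)) (nhds (Real.sin x)) := by
    have hconst : Tendsto (fun _ : ℝ => C) (nhdsWithin (0:ℝ) (Set.Ioi 0)) (nhds C) :=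
      tendsto_const_nhds
    have := ((Filter.Tendsto.sub hconst hR).const_mul (Real.sin x)).const_mul C⁻¹
    have heq : C⁻¹ * (Real.sin x * (C - 0)) = Real.sin x := by
      rw [sub_zero, mul_comm (Real.sin x) C, ← mul_assoc, inv_mul_cancel₀ hCne, one_mul]
    rwa [heq] at this
  apply hlim.congr'
  filter_upwards [self_mem_nhdsWithin] with ε hε
  have hε' : (0:ℝ) < ε := hε
  have h1 := (part3 hs0 hs1 x hε').2
  have h2 : ∫ z in {z : ℝ | ε < |z|}, f z = C - ∫ z in {z : ℝ | ε < |z|}ᶜ, f z := by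
    have := integral_add_compl (meas_set ε) hInt
    rw [hC]; linarith
  rw [h1, ← h2]

end
end
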